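/- Let A be an m×m real orthogonal matrix and x₁,…,xₙ ∈ R^m, with X the m×n matrix whose columns are the x_i. If Σ_{i,j} ⟨x_i, A x_j⟩² = Σ_{i,j} ⟨x_i, x_j⟩², then X X^T commutes with A. -/
import Mathlib

open Matrix

lemma trace_transpose_mul_self {k l : ℕ} (B : Matrix (Fin k) (Fin l) ℝ) :
    (Bᵀ * B).trace = ∑ j : Fin l, ∑ i : Fin k, (B i j) ^ 2 := by
  simp [Matrix.trace, Matrix.mul_apply, Matrix.diag, sq]

lemma eq_zero_of_trace_transpose_mul_self {k l : ℕ} (B : Matrix (Fin k) (Fin l) ℝ)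
    (h : (Bᵀ * B).trace = 0) : B = 0 := by
  rw [trace_transpose_mul_self] at h
  ext i j
  have h1 : ∀ j ∈ Finset.univ, (0:ℝ) ≤ ∑ i : Fin k, (B i j) ^ 2 := fun j _ =>
    Finset.sum_nonneg fun i _ => sq_nonneg _
  have h2 := (Finset.sum_eq_zero_iff_of_nonneg h1).mp h j (Finset.mem_univ j)
  have h3 := (Finset.sum_eq_zero_iff_of_nonneg (fun i _ => sq_nonneg (B i j))).mp h2 i
    (Finset.mem_univ i)
  simpa using pow_eq_zero_iff (n := 2) (by norm_num) |>.mp h3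

/-- If equality holds in the inequality Σ⟨x_i,Ax_j⟩² ≤ Σ⟨x_i,x_j⟩², then XXᵀ commutes
with A, where X is the matrix with columns x_i. -/
theorem commutes_of_eq_sum_sq_inner (m n : ℕ) (A : Matrix (Fin m) (Fin m) ℝ)
    (hA : Aᵀ * A = 1) (x : Fin n → Fin m → ℝ)
    (X : Matrix (Fin m) (Fin n) ℝ) (hX : ∀ i j, X i j = x j i)
    (heq : ∑ i : Fin n, ∑ j : Fin n, (x i ⬝ᵥ A.mulVec (x j)) ^ 2 =
      ∑ i : Fin n, ∑ j : Fin n, (x i ⬝ᵥ x j) ^ 2) :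
    (X * Xᵀ) * A = A * (X * Xᵀ) := by
  have hAAt : A * Aᵀ = 1 := mul_eq_one_comm.mp hA
  set S : Matrix (Fin m) (Fin m) ℝ := X * Xᵀ with hS
  have hSsymm : Sᵀ = S := by rw [hS, Matrix.transpose_mul, Matrix.transpose_transpose]
  have hB : ∀ i j, (Xᵀ * A * X) i j = x i ⬝ᵥ A.mulVec (x j) := by
    intro i j
    simp only [Matrix.mul_apply, Matrix.transpose_apply, Matrix.mulVec, dotProduct, hX,
      Finset.sum_mul, Finset.mul_sum]
    rw [Finset.sum_comm]; simp only [mul_assoc]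
  have hC : ∀ i j, (Xᵀ * X) i j = x i ⬝ᵥ x j := by
    intro i j
    simp only [Matrix.mul_apply, Matrix.transpose_apply, dotProduct, hX]
  have hL : ∑ i : Fin n, ∑ j : Fin n, (x i ⬝ᵥ A.mulVec (x j)) ^ 2
      = ((Xᵀ * A * X)ᵀ * (Xᵀ * A * X)).trace := by
    rw [trace_transpose_mul_self, Finset.sum_comm]
    exact Finset.sum_congr rfl fun j _ => Finset.sum_congr rfl fun i _ => by rw [hB]
  have hR : ∑ i : Fin n, ∑ j : Fin n, (x i ⬝ᵥ x j) ^ 2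
      = ((Xᵀ * X)ᵀ * (Xᵀ * X)).trace := by
    rw [trace_transpose_mul_self, Finset.sum_comm]
    exact Finset.sum_congr rfl fun j _ => Finset.sum_congr rfl fun i _ => by rw [hC]
  have htr : (Aᵀ * S * A * S).trace = (S * S).trace := by
    have e1 : ((Xᵀ * A * X)ᵀ * (Xᵀ * A * X)).trace = (Aᵀ * S * A * S).trace := by
      calc ((Xᵀ * A * X)ᵀ * (Xᵀ * A * X)).trace
          = (Xᵀ * (Aᵀ * (X * Xᵀ) * A * X)).trace := by
            rw [Matrix.transpose_mul, Matrix.transpose_mul, Matrix.transpose_transpose]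
            simp only [Matrix.mul_assoc]
        _ = ((Aᵀ * (X * Xᵀ) * A * X) * Xᵀ).trace := Matrix.trace_mul_comm _ _
        _ = (Aᵀ * S * A * S).trace := by rw [hS]; simp only [Matrix.mul_assoc]
    have e2 : ((Xᵀ * X)ᵀ * (Xᵀ * X)).trace = (S * S).trace := by
      calc ((Xᵀ * X)ᵀ * (Xᵀ * X)).trace
          = (Xᵀ * ((X * Xᵀ) * X)).trace := by
            rw [Matrix.transpose_mul, Matrix.transpose_transpose]
            simp only [Matrix.mul_assoc]
        _ = (((X * Xᵀ) * X) * Xᵀ).trace := Matrix.trace_mul_comm _ _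
        _ = (S * S).trace := by rw [hS]; simp only [Matrix.mul_assoc]
    rw [← e1, ← e2, ← hL, ← hR, heq]
  set M : Matrix (Fin m) (Fin m) ℝ := Aᵀ * S * A - S with hM
  have hMsymm : Mᵀ = M := by
    rw [hM, Matrix.transpose_sub, hSsymm, Matrix.transpose_mul, Matrix.transpose_mul,
      Matrix.transpose_transpose, hSsymm]
    simp only [hS, Matrix.mul_assoc]
  have hMM : (Mᵀ * M).trace = 0 := by
    rw [hMsymm, hM, sub_mul, mul_sub, mul_sub]
    rw [Matrix.trace_sub, Matrix.trace_sub, Matrix.trace_sub]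
    have t1 : (Aᵀ * S * A * (Aᵀ * S * A)).trace = (S * S).trace := by
      rw [show Aᵀ * S * A * (Aᵀ * S * A) = Aᵀ * (S * (A * Aᵀ) * S * A) by
        simp only [Matrix.mul_assoc], hAAt, Matrix.mul_one, Matrix.trace_mul_comm]
      rw [show S * S * A * Aᵀ = S * S * (A * Aᵀ) by simp only [Matrix.mul_assoc], hAAt,
        Matrix.mul_one]
    have t2 : (S * (Aᵀ * S * A)).trace = (Aᵀ * S * A * S).trace := Matrix.trace_mul_comm _ _
    rw [t1, t2, htr]
    ring
  have hM0 : M = 0 := eq_zero_of_trace_transpose_mul_self M hMM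
  have hASA : Aᵀ * S * A = S := sub_eq_zero.mp (hM ▸ hM0)
  calc S * A = (A * Aᵀ) * S * A := by rw [hAAt, Matrix.one_mul]
    _ = A * (Aᵀ * S * A) := by simp only [Matrix.mul_assoc]
    _ = A * S := by rw [hASA]
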